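/- Let f : P → Q be a (λ, c)-quasi-isometry between graphs with path metrics. Then F : H_P → H_Q, F(x, m) = (f(x), m), is a quasi-isometry between the combinatorial horoballs, with constants depending only on λ and c. -/

import Mathlib

open SimpleGraph

/-- The Groves–Manning combinatorial horoball over a graph `G`: vertex set `V × ℕ`,
horizontal edges between `(x, m)` and `(y, m)` whenever `dist x y ≤ 2 ^ m`, and
vertical edges between `(x, m)` and `(x, m + 1)`. -/
def Horoball {V : Type*} (G : SimpleGraph V) : SimpleGraph (V × ℕ) where
  Adj p q :=
    (p.2 = q.2 ∧ p.1 ≠ q.1 ∧ G.dist p.1 q.1 ≤ 2 ^ p.2) ∨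
    (p.1 = q.1 ∧ (p.2 = q.2 + 1 ∨ q.2 = p.2 + 1))
  symm := by
    constructor
    rintro ⟨x, m⟩ ⟨y, n⟩ (⟨h1, h2, h3⟩ | ⟨h1, h2⟩)
    · exact Or.inl ⟨h1.symm, h2.symm, by simp only at h1 h3 ⊢; rw [SimpleGraph.dist_comm, ← h1]; exact h3⟩
    · exact Or.inr ⟨h1.symm, h2.symm⟩
  loopless := by
    constructor
    rintro ⟨x, m⟩ (⟨_, h, _⟩ | ⟨_, h | h⟩)
    · exact h rfl
    · omega
    · omega

/-- Vertical walks in the horoball. -/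
lemma horoball_vert_walk {V : Type*} (G : SimpleGraph V) (x : V) (m : ℕ) :
    ∀ j : ℕ, ∃ w : (Horoball G).Walk (x, m) (x, m + j), w.length = j := by
  intro j
  induction j with
  | zero => exact ⟨SimpleGraph.Walk.nil, rfl⟩
  | succ j ih =>
    obtain ⟨w, hw⟩ := ih
    have hadj : (Horoball G).Adj (x, m + j) (x, m + (j + 1)) :=
      Or.inr ⟨rfl, Or.inr rfl⟩
    exact ⟨w.concat hadj, by rw [SimpleGraph.Walk.length_concat, hw]⟩

/-- Walk from `(x,m)` to `(y,n)`: go up to level `t`, across, and down. -/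
lemma horoball_upper_walk {V : Type*} (G : SimpleGraph V) (x y : V) (m n : ℕ) :
    ∃ w : (Horoball G).Walk (x, m) (y, n),
      w.length ≤ 2 * max (max m n) (Nat.clog 2 (G.dist x y)) - (m + n) + 1 := by
  set t := max (max m n) (Nat.clog 2 (G.dist x y)) with ht
  have hm : m ≤ t := le_trans (le_max_left m n) (le_max_left _ _)
  have hn : n ≤ t := le_trans (le_max_right m n) (le_max_left _ _)
  obtain ⟨up, hup⟩ := horoball_vert_walk G x m (t - m)
  obtain ⟨down, hdown⟩ := horoball_vert_walk G y n (t - n)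
  have e1 : (x, m + (t - m)) = (x, t) := by rw [Nat.add_sub_cancel' hm]
  have e2 : (y, n + (t - n)) = (y, t) := by rw [Nat.add_sub_cancel' hn]
  let up' : (Horoball G).Walk (x, m) (x, t) := up.copy rfl e1
  let down' : (Horoball G).Walk (y, n) (y, t) := down.copy rfl e2
  have hup' : up'.length = t - m := by
    simpa [up', SimpleGraph.Walk.length_copy] using hup
  have hdown' : down'.length = t - n := by
    simpa [down', SimpleGraph.Walk.length_copy] using hdown
  by_cases hxy : x = y
  · subst hxy
    refine ⟨up'.append down'.reverse, ?_⟩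
    rw [SimpleGraph.Walk.length_append, SimpleGraph.Walk.length_reverse, hup', hdown']
    omega
  · have hd : G.dist x y ≤ 2 ^ t := by
      calc G.dist x y ≤ 2 ^ Nat.clog 2 (G.dist x y) := Nat.le_pow_clog one_lt_two _
        _ ≤ 2 ^ t := Nat.pow_le_pow_right (by norm_num) (le_max_right _ _)
    have hadj : (Horoball G).Adj (x, t) (y, t) := Or.inl ⟨rfl, hxy, hd⟩
    refine ⟨up'.append (SimpleGraph.Walk.cons hadj down'.reverse), ?_⟩
    rw [SimpleGraph.Walk.length_append, SimpleGraph.Walk.length_cons,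
      SimpleGraph.Walk.length_reverse, hup', hdown']
    omega

/-- Levels along a walk in the horoball grow at most linearly. -/
lemma horoball_level_le {V : Type*} {G : SimpleGraph V} :
    ∀ {p q : V × ℕ} (w : (Horoball G).Walk p q), ∀ r ∈ w.support, r.2 ≤ p.2 + w.length := by
  intro p q w
  induction w with
  | nil => intro r hr; simp_all
  | @cons a b c hadj w ih =>
    intro r hr
    rw [SimpleGraph.Walk.support_cons] at hr
    rcases List.mem_cons.mp hr with h | h
    · subst h; simp
    · have h1 : r.2 ≤ b.2 + w.length := ih r h
      have h2 : b.2 ≤ a.2 + 1 := by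
        rcases hadj with ⟨h, _, _⟩ | ⟨_, h | h⟩ <;> omega
      rw [SimpleGraph.Walk.length_cons]
      omega

/-- Horizontal displacement along a walk staying below level `T`. -/
lemma horoball_horiz_le {V : Type*} {G : SimpleGraph V} (hG : G.Connected) {T : ℕ} :
    ∀ {p q : V × ℕ} (w : (Horoball G).Walk p q), (∀ r ∈ w.support, r.2 ≤ T) →
      G.dist p.1 q.1 ≤ w.length * 2 ^ T := by
  intro p q w
  induction w with
  | nil => intro _; simp [SimpleGraph.dist_self]
  | @cons a b c hadj w ih =>
    intro hT
    have hstep : G.dist a.1 b.1 ≤ 2 ^ T := by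
      rcases hadj with ⟨_, _, h3⟩ | ⟨h1, _⟩
      · have ha : a.2 ≤ T := hT a (by simp [SimpleGraph.Walk.support_cons])
        exact le_trans h3 (Nat.pow_le_pow_right (by norm_num) ha)
      · rw [h1, SimpleGraph.dist_self]; exact Nat.zero_le _
    have hrest : G.dist b.1 c.1 ≤ w.length * 2 ^ T := by
      apply ih
      intro r hr
      exact hT r (by rw [SimpleGraph.Walk.support_cons]; exact List.mem_cons_of_mem _ hr)
    calc G.dist a.1 c.1 ≤ G.dist a.1 b.1 + G.dist b.1 c.1 := hG.dist_triangle
      _ ≤ 2 ^ T + w.length * 2 ^ T := Nat.add_le_add hstep hrest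
      _ = (SimpleGraph.Walk.cons hadj w).length * 2 ^ T := by
          rw [SimpleGraph.Walk.length_cons]; ring

/-- Lower bound: any walk in the horoball has length at least a quarter of `ρ - 1`. -/
lemma horoball_lower {V : Type*} {G : SimpleGraph V} (hG : G.Connected)
    (x y : V) (m n : ℕ) (w : (Horoball G).Walk (x, m) (y, n)) :
    2 * max (max m n) (Nat.clog 2 (G.dist x y)) ≤ 4 * w.length + (m + n) := by
  set L := w.length with hL
  have h1 : ∀ r ∈ w.support, r.2 ≤ m + L := fun r hr => horoball_level_le w r hr
  have h2 : ∀ r ∈ w.support, r.2 ≤ n + L := by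
    intro r hr
    have hr' : r ∈ w.reverse.support := by
      rw [SimpleGraph.Walk.support_reverse]; exact List.mem_reverse.mpr hr
    have := horoball_level_le w.reverse r hr'
    rwa [SimpleGraph.Walk.length_reverse] at this
  have hmn : m ≤ n + L := h2 (x, m) w.start_mem_support
  have hnm : n ≤ m + L := h1 (y, n) w.end_mem_support
  set T := min m n + L with hT
  have hTb : ∀ r ∈ w.support, r.2 ≤ T := by
    intro r hr
    have := h1 r hr
    have := h2 r hr
    omega
  have hd : G.dist x y ≤ L * 2 ^ T := horoball_horiz_le hG w hTb
  rcases Nat.eq_zero_or_pos (G.dist x y) with h0 | hpos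
  · rw [h0, Nat.clog_zero_right]
    omega
  · have hLpos : 1 ≤ L := by
      by_contra h
      push_neg at h
      interval_cases L
      omega
    set s := Nat.clog 2 L with hs
    have hsL : s ≤ L := (Nat.clog_le_iff_le_pow one_lt_two).mpr (Nat.le_of_lt (Nat.lt_two_pow_self (n := L)))
    have hdk : G.dist x y ≤ 2 ^ (s + T) := by
      calc G.dist x y ≤ L * 2 ^ T := hd
        _ ≤ 2 ^ s * 2 ^ T := Nat.mul_le_mul_right _ (Nat.le_pow_clog one_lt_two _)
        _ = 2 ^ (s + T) := (pow_add 2 s T).symm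
    have hk : Nat.clog 2 (G.dist x y) ≤ s + T := (Nat.clog_le_iff_le_pow one_lt_two).mpr hdk
    omega

theorem horoball_extension_qi (lam c : ℝ) (hlam : 1 ≤ lam) (hc : 0 ≤ c) :
    ∃ lam' c' : ℝ, 1 ≤ lam' ∧ 0 ≤ c' ∧
      ∀ (V W : Type) (G : SimpleGraph V) (G' : SimpleGraph W),
        G.Connected → G'.Connected →
        ∀ f : V → W,
          (∀ x y : V,
            (1 / lam) * (G.dist x y : ℝ) - c ≤ (G'.dist (f x) (f y) : ℝ) ∧
            (G'.dist (f x) (f y) : ℝ) ≤ lam * (G.dist x y : ℝ) + c) →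
          (∀ w : W, ∃ v : V, (G'.dist w (f v) : ℝ) ≤ c) →
          (∀ p q : V × ℕ,
            (1 / lam') * ((Horoball G).dist p q : ℝ) - c' ≤
              ((Horoball G').dist (f p.1, p.2) (f q.1, q.2) : ℝ) ∧
            ((Horoball G').dist (f p.1, p.2) (f q.1, q.2) : ℝ) ≤
              lam' * ((Horoball G).dist p q : ℝ) + c') ∧
          (∀ q : W × ℕ, ∃ p : V × ℕ,
            ((Horoball G').dist q (f p.1, p.2) : ℝ) ≤ c') := by
  classical
  set A : ℕ := ⌈lam * (1 + c)⌉₊ + ⌈lam + c⌉₊ with hA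
  have hlam0 : (0 : ℝ) < lam := lt_of_lt_of_le one_pos hlam
  have hA2R : ((A : ℝ)) ≤ 2 ^ A := by
    have := Nat.lt_two_pow_self (n := A)
    calc (A : ℝ) ≤ ((2 ^ A : ℕ) : ℝ) := by exact_mod_cast this.le
      _ = 2 ^ A := by push_cast; ring
  have hA1 : lam + c ≤ (2 : ℝ) ^ A := by
    have h1 : lam + c ≤ (⌈lam + c⌉₊ : ℝ) := Nat.le_ceil _
    have h2 : ((⌈lam + c⌉₊ : ℕ) : ℝ) ≤ (A : ℝ) := by exact_mod_cast Nat.le_add_left _ _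
    linarith
  have hA3 : lam * (1 + c) ≤ (2 : ℝ) ^ A := by
    have h1 : lam * (1 + c) ≤ (⌈lam * (1 + c)⌉₊ : ℝ) := Nat.le_ceil _
    have h2 : ((⌈lam * (1 + c)⌉₊ : ℕ) : ℝ) ≤ (A : ℝ) := by exact_mod_cast Nat.le_add_right _ _
    linarith
  have hcA : c ≤ (A : ℝ) := by
    have h1 : lam + c ≤ (⌈lam + c⌉₊ : ℝ) := Nat.le_ceil _
    have h2 : ((⌈lam + c⌉₊ : ℕ) : ℝ) ≤ (A : ℝ) := by exact_mod_cast Nat.le_add_left _ _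
    linarith
  refine ⟨4, 2 * A + 1, by norm_num, by positivity, ?_⟩
  intro V W G G' hGc hG'c f hf hdense
  -- comparison of clogs of distances
  have hk1 : ∀ x y : V,
      Nat.clog 2 (G'.dist (f x) (f y)) ≤ Nat.clog 2 (G.dist x y) + A := by
    intro x y
    rw [Nat.clog_le_iff_le_pow one_lt_two]
    set k := Nat.clog 2 (G.dist x y) with hk
    have hD : (G.dist x y : ℝ) ≤ 2 ^ k := by
      exact_mod_cast Nat.le_pow_clog one_lt_two (G.dist x y)
    have h2k : (1 : ℝ) ≤ 2 ^ k := one_le_pow₀ (by norm_num)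
    have hub := (hf x y).2
    have : (G'.dist (f x) (f y) : ℝ) ≤ 2 ^ (k + A) := by
      have : (G'.dist (f x) (f y) : ℝ) ≤ (lam + c) * 2 ^ k := by
        nlinarith
      calc (G'.dist (f x) (f y) : ℝ) ≤ (lam + c) * 2 ^ k := this
        _ ≤ 2 ^ A * 2 ^ k := by nlinarith
        _ = 2 ^ (k + A) := by rw [← pow_add]; ring_nf
    exact_mod_cast this
  have hk2 : ∀ x y : V,
      Nat.clog 2 (G.dist x y) ≤ Nat.clog 2 (G'.dist (f x) (f y)) + A := by
    intro x y
    rw [Nat.clog_le_iff_le_pow one_lt_two]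
    set k' := Nat.clog 2 (G'.dist (f x) (f y)) with hk'
    have hD : (G'.dist (f x) (f y) : ℝ) ≤ 2 ^ k' := by
      exact_mod_cast Nat.le_pow_clog one_lt_two (G'.dist (f x) (f y))
    have h2k : (1 : ℝ) ≤ 2 ^ k' := one_le_pow₀ (by norm_num)
    have hlb := (hf x y).1
    have : (G.dist x y : ℝ) ≤ 2 ^ (k' + A) := by
      have h1 : (G.dist x y : ℝ) ≤ lam * (G'.dist (f x) (f y) : ℝ) + lam * c := by
        have := mul_le_mul_of_nonneg_left
          (sub_le_iff_le_add.mp hlb) hlam0.le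
        rw [mul_add] at this
        calc (G.dist x y : ℝ) = lam * ((1 / lam) * (G.dist x y : ℝ)) := by
              field_simp
          _ ≤ lam * (G'.dist (f x) (f y) : ℝ) + lam * c := this
      have h2 : (G.dist x y : ℝ) ≤ lam * (1 + c) * 2 ^ k' := by
        nlinarith [mul_le_mul_of_nonneg_left hD hlam0.le,
          mul_le_mul_of_nonneg_left h2k (mul_nonneg hlam0.le hc)]
      calc (G.dist x y : ℝ) ≤ lam * (1 + c) * 2 ^ k' := h2
        _ ≤ 2 ^ A * 2 ^ k' := by nlinarith
        _ = 2 ^ (k' + A) := by rw [← pow_add]; ring_nf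
    exact_mod_cast this
  constructor
  · rintro ⟨x, m⟩ ⟨y, n⟩
    simp only
    set L := (Horoball G).dist (x, m) (y, n) with hLdef
    set L' := (Horoball G').dist (f x, m) (f y, n) with hL'def
    set k := Nat.clog 2 (G.dist x y) with hk
    set k' := Nat.clog 2 (G'.dist (f x) (f y)) with hk'
    -- upper bounds on distances
    obtain ⟨w1, hw1⟩ := horoball_upper_walk G x y m n
    obtain ⟨w1', hw1'⟩ := horoball_upper_walk G' (f x) (f y) m n
    have hup : L ≤ 2 * max (max m n) k - (m + n) + 1 :=
      le_trans (SimpleGraph.dist_le w1) hw1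
    have hup' : L' ≤ 2 * max (max m n) k' - (m + n) + 1 :=
      le_trans (SimpleGraph.dist_le w1') hw1'
    -- geodesic walks exist
    obtain ⟨g, hg⟩ := (SimpleGraph.Walk.reachable w1).exists_walk_length_eq_dist
    obtain ⟨g', hg'⟩ := (SimpleGraph.Walk.reachable w1').exists_walk_length_eq_dist
    have hlow : 2 * max (max m n) k ≤ 4 * L + (m + n) := by
      have := horoball_lower hGc x y m n g
      rwa [hg] at this
    have hlow' : 2 * max (max m n) k' ≤ 4 * L' + (m + n) := by
      have := horoball_lower hG'c (f x) (f y) m n g'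
      rwa [hg'] at this
    have hkk1 : k' ≤ k + A := hk1 x y
    have hkk2 : k ≤ k' + A := hk2 x y
    have hN1 : L' ≤ 4 * L + (2 * A + 1) := by omega
    have hN2 : L ≤ 4 * L' + (2 * A + 1) := by omega
    constructor
    · have : (L : ℝ) ≤ 4 * (L' : ℝ) + (2 * (A : ℝ) + 1) := by exact_mod_cast hN2
      have hApos : (0 : ℝ) ≤ (A : ℝ) := Nat.cast_nonneg _
      linarith
    · have : (L' : ℝ) ≤ 4 * (L : ℝ) + (2 * (A : ℝ) + 1) := by exact_mod_cast hN1
      linarith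
  · rintro ⟨w, n⟩
    obtain ⟨v, hv⟩ := hdense w
    refine ⟨(v, n), ?_⟩
    simp only
    have hdA : G'.dist w (f v) ≤ A := by
      have : (G'.dist w (f v) : ℝ) ≤ (A : ℝ) := le_trans hv hcA
      exact_mod_cast this
    have hkA : Nat.clog 2 (G'.dist w (f v)) ≤ A := by
      rw [Nat.clog_le_iff_le_pow one_lt_two]
      exact le_trans hdA (Nat.le_of_lt (Nat.lt_two_pow_self (n := A)))
    obtain ⟨w2, hw2⟩ := horoball_upper_walk G' w (f v) n n
    have hdist : (Horoball G').dist (w, n) (f v, n) ≤ 2 * A + 1 := by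
      have h1 := le_trans (SimpleGraph.dist_le w2) hw2
      have hmax : max (max n n) (Nat.clog 2 (G'.dist w (f v))) ≤ n + A := by omega
      omega
    calc ((Horoball G').dist (w, n) (f v, n) : ℝ) ≤ ((2 * A + 1 : ℕ) : ℝ) := by
          exact_mod_cast hdist
      _ = 2 * (A : ℝ) + 1 := by push_cast; ring
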